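/- Let n ≥ 1 be an integer, let ν > n and ρ > ν be real numbers, let β > 0 and c₀ ∈ ℝ, and let f, g : ℝⁿ → ℝ be measurable functions such that |f(x)| ≤ β(1+|x|)^{−ρ} and |g(x)| ≤ β(1+|x|)^{−ν} for all x, and such that |x|^ν · g(x) → c₀ as |x| → ∞. Then |q|^ν · ∫_{ℝⁿ} f(y) · g(y − q) dy → c₀ · ∫_{ℝⁿ} f(y) dy as |q| → ∞. -/

import Mathlib

open MeasureTheory Filter Bornology Real

private lemma aux_pow_bound {ν a t : ℝ} (hν : 0 < ν) (ha : 0 ≤ a) (ht : a / 2 ≤ t) :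
    a ^ ν * (1 + t) ^ (-ν) ≤ 2 ^ ν := by
  have h1 : (0:ℝ) < 1 + t := by nlinarith
  have h2 : a ≤ 2 * (1 + t) := by linarith
  calc a ^ ν * (1 + t) ^ (-ν) ≤ (2 * (1 + t)) ^ ν * (1 + t) ^ (-ν) :=
        mul_le_mul_of_nonneg_right (Real.rpow_le_rpow ha h2 hν.le) (Real.rpow_nonneg h1.le _)
    _ = 2 ^ ν * ((1 + t) ^ ν * (1 + t) ^ (-ν)) := by
        rw [Real.mul_rpow (by norm_num) h1.le]; ring
    _ = 2 ^ ν := by rw [← Real.rpow_add h1]; norm_num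

private lemma aux_pow_bound2 {ν a : ℝ} (hν : 0 < ν) (ha : 0 ≤ a) :
    a ^ ν ≤ 2 ^ ν * (1 + a / 2) ^ ν := by
  have h1 : (0:ℝ) ≤ 1 + a / 2 := by linarith
  have h2 : a ≤ 2 * (1 + a / 2) := by linarith
  calc a ^ ν ≤ (2 * (1 + a / 2)) ^ ν := Real.rpow_le_rpow ha h2 hν.le
    _ = 2 ^ ν * (1 + a / 2) ^ ν := Real.mul_rpow (by norm_num) h1

theorem stmt14 (n : ℕ) (hn : 1 ≤ n) (ν ρ β c₀ : ℝ) (hν : (n : ℝ) < ν) (hρ : ν < ρ)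
    (hβ : 0 < β)
    (f g : EuclideanSpace ℝ (Fin n) → ℝ) (hf : Measurable f) (hg : Measurable g)
    (hfb : ∀ x, |f x| ≤ β * (1 + ‖x‖) ^ (-ρ))
    (hgb : ∀ x, |g x| ≤ β * (1 + ‖x‖) ^ (-ν))
    (hgas : Filter.Tendsto (fun x : EuclideanSpace ℝ (Fin n) => ‖x‖ ^ ν * g x)
      (Bornology.cobounded (EuclideanSpace ℝ (Fin n))) (nhds c₀)) :
    Filter.Tendsto
      (fun q : EuclideanSpace ℝ (Fin n) => ‖q‖ ^ ν * ∫ y, f y * g (y - q))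
      (Bornology.cobounded (EuclideanSpace ℝ (Fin n))) (nhds (c₀ * ∫ y, f y)) := by
  have hν0 : (0:ℝ) < ν := lt_of_le_of_lt (Nat.cast_nonneg n) hν
  have hρ0 : (0:ℝ) < ρ := hν0.trans hρ
  have hcg : (cobounded (EuclideanSpace ℝ (Fin n))).IsCountablyGenerated := by
    rw [← comap_norm_atTop]; infer_instance
  have hfinrank : (Module.finrank ℝ (EuclideanSpace ℝ (Fin n)) : ℝ) = n := by
    rw [finrank_euclideanSpace, Fintype.card_fin]
  have hIρ : Integrable (fun y : EuclideanSpace ℝ (Fin n) => (1 + ‖y‖) ^ (-ρ)) :=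
    integrable_one_add_norm (by rw [hfinrank]; exact hν.trans hρ)
  have hIν : Integrable (fun y : EuclideanSpace ℝ (Fin n) => (1 + ‖y‖) ^ (-ν)) :=
    integrable_one_add_norm (by rw [hfinrank]; exact hν)
  have h1y : ∀ y : EuclideanSpace ℝ (Fin n), (0:ℝ) < 1 + ‖y‖ := fun y => by
    have := norm_nonneg y; linarith
  -- pointwise limit : ‖q‖^ν g(y-q) → c₀ for each fixed y
  have key : ∀ y : EuclideanSpace ℝ (Fin n),
      Tendsto (fun q : EuclideanSpace ℝ (Fin n) => ‖q‖ ^ ν * g (y - q))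
        (cobounded (EuclideanSpace ℝ (Fin n))) (nhds c₀) := by
    intro y
    have htri : ∀ q : EuclideanSpace ℝ (Fin n), ‖q‖ - ‖y‖ ≤ ‖y - q‖ := by
      intro q
      have h := norm_sub_le y (y - q)
      rw [sub_sub_cancel] at h
      linarith
    have htri2 : ∀ q : EuclideanSpace ℝ (Fin n), ‖q‖ ≤ ‖y‖ + ‖y - q‖ := by
      intro q; have := htri q; linarith
    have htri3 : ∀ q : EuclideanSpace ℝ (Fin n), ‖y - q‖ ≤ ‖y‖ + ‖q‖ := fun q => norm_sub_le _ _
    have hnormsub : Tendsto (fun q : EuclideanSpace ℝ (Fin n) => ‖y - q‖)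
        (cobounded (EuclideanSpace ℝ (Fin n))) atTop := by
      apply tendsto_atTop_mono' _ _
        (tendsto_atTop_add_const_right _ (-‖y‖) tendsto_norm_cobounded_atTop)
      filter_upwards with q
      have := htri q
      simpa [sub_eq_add_neg] using this
    have hsub : Tendsto (fun q : EuclideanSpace ℝ (Fin n) => y - q)
        (cobounded (EuclideanSpace ℝ (Fin n))) (cobounded (EuclideanSpace ℝ (Fin n))) := by
      have h := tendsto_comap_iff.mpr (by exact hnormsub :
        Tendsto (Norm.norm ∘ fun q : EuclideanSpace ℝ (Fin n) => y - q)
          (cobounded (EuclideanSpace ℝ (Fin n))) atTop)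
      rwa [comap_norm_atTop] at h
    have h3 : Tendsto (fun q : EuclideanSpace ℝ (Fin n) => ‖y - q‖ ^ ν * g (y - q))
        (cobounded (EuclideanSpace ℝ (Fin n))) (nhds c₀) := hgas.comp hsub
    have hpos : ∀ᶠ q : EuclideanSpace ℝ (Fin n) in cobounded (EuclideanSpace ℝ (Fin n)),
        0 < ‖y - q‖ := hnormsub.eventually_gt_atTop 0
    have hinv : Tendsto (fun q : EuclideanSpace ℝ (Fin n) => ‖y‖ / ‖y - q‖)
        (cobounded (EuclideanSpace ℝ (Fin n))) (nhds 0) :=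
      Tendsto.div_atTop tendsto_const_nhds hnormsub
    have hratio : Tendsto (fun q : EuclideanSpace ℝ (Fin n) => ‖q‖ / ‖y - q‖)
        (cobounded (EuclideanSpace ℝ (Fin n))) (nhds 1) := by
      have hlo : Tendsto (fun q : EuclideanSpace ℝ (Fin n) => 1 - ‖y‖ / ‖y - q‖)
          (cobounded (EuclideanSpace ℝ (Fin n))) (nhds 1) := by
        simpa using (tendsto_const_nhds (x := (1:ℝ))).sub hinv
      have hhi : Tendsto (fun q : EuclideanSpace ℝ (Fin n) => 1 + ‖y‖ / ‖y - q‖)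
          (cobounded (EuclideanSpace ℝ (Fin n))) (nhds 1) := by
        simpa using (tendsto_const_nhds (x := (1:ℝ))).add hinv
      apply tendsto_of_tendsto_of_tendsto_of_le_of_le' hlo hhi
      · filter_upwards [hpos] with q hq
        have heq : 1 - ‖y‖ / ‖y - q‖ = (‖y - q‖ - ‖y‖) / ‖y - q‖ := by
          field_simp
          try ring
        rw [heq]
        gcongr
        linarith [htri3 q]
      · filter_upwards [hpos] with q hq
        have heq : 1 + ‖y‖ / ‖y - q‖ = (‖y‖ + ‖y - q‖) / ‖y - q‖ := by
          field_simp
          try ring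
        rw [heq]
        gcongr
        exact htri2 q
    have hpow : Tendsto (fun q : EuclideanSpace ℝ (Fin n) => (‖q‖ / ‖y - q‖) ^ ν)
        (cobounded (EuclideanSpace ℝ (Fin n))) (nhds 1) := by
      have hc : ContinuousAt (fun x : ℝ => x ^ ν) 1 :=
        Real.continuousAt_rpow_const 1 ν (Or.inl one_ne_zero)
      have := hc.tendsto.comp hratio
      simpa [Function.comp_def, Real.one_rpow] using this
    have hmul := hpow.mul h3
    rw [one_mul] at hmul
    apply hmul.congr'
    filter_upwards [hpos] with q hq
    have hne : ‖y - q‖ ^ ν ≠ 0 := (Real.rpow_pos_of_pos hq _).ne'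
    rw [Real.div_rpow (norm_nonneg _) (norm_nonneg _)]
    field_simp
  -- the decomposition sets
  set A : EuclideanSpace ℝ (Fin n) → Set (EuclideanSpace ℝ (Fin n)) :=
    fun q => {y | ‖q‖ / 2 ≤ ‖y - q‖} with hAdef
  have hAmeas : ∀ q, MeasurableSet (A q) :=
    fun q => measurableSet_le measurable_const ((measurable_id.sub measurable_const).norm)
  set F : EuclideanSpace ℝ (Fin n) → EuclideanSpace ℝ (Fin n) → ℝ :=
    fun q y => ‖q‖ ^ ν * (f y * g (y - q)) with hFdef
  have hFmeas : ∀ q, Measurable (F q) :=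
    fun q => measurable_const.mul (hf.mul (hg.comp (measurable_id.sub measurable_const)))
  have hgb1 : ∀ x : EuclideanSpace ℝ (Fin n), |g x| ≤ β := by
    intro x
    refine (hgb x).trans ?_
    calc β * (1 + ‖x‖) ^ (-ν) ≤ β * 1 := by
          apply mul_le_mul_of_nonneg_left _ hβ.le
          exact Real.rpow_le_one_of_one_le_of_nonpos (by have := norm_nonneg x; linarith)
            (by linarith)
      _ = β := mul_one β
  have hFbound : ∀ q y, |F q y| ≤ ‖q‖ ^ ν * β * β * (1 + ‖y‖) ^ (-ρ) := by
    intro q y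
    rw [hFdef]
    simp only [abs_mul, abs_of_nonneg (Real.rpow_nonneg (norm_nonneg q) ν)]
    calc ‖q‖ ^ ν * (|f y| * |g (y - q)|)
        ≤ ‖q‖ ^ ν * ((β * (1 + ‖y‖) ^ (-ρ)) * β) := by
          apply mul_le_mul_of_nonneg_left _ (Real.rpow_nonneg (norm_nonneg q) ν)
          exact mul_le_mul (hfb y) (hgb1 _) (abs_nonneg _)
            (mul_nonneg hβ.le (Real.rpow_nonneg (h1y y).le _))
      _ = ‖q‖ ^ ν * β * β * (1 + ‖y‖) ^ (-ρ) := by ring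
  have hFint : ∀ q, Integrable (F q) := by
    intro q
    apply Integrable.mono' (hIρ.const_mul (‖q‖ ^ ν * β * β)) (hFmeas q).aestronglyMeasurable
    filter_upwards with y
    rw [Real.norm_eq_abs]
    exact hFbound q y
  -- Part A : the main term
  have hA : Tendsto (fun q => ∫ y, (A q).indicator (F q) y)
      (cobounded (EuclideanSpace ℝ (Fin n))) (nhds (∫ y, f y * c₀)) := by
    apply tendsto_integral_filter_of_dominated_convergence
      (bound := fun y => 2 ^ ν * β * β * (1 + ‖y‖) ^ (-ρ))
    · filter_upwards with q
      exact ((hFmeas q).indicator (hAmeas q)).aestronglyMeasurable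
    · filter_upwards with q
      filter_upwards with y
      rw [Real.norm_eq_abs]
      by_cases hy : y ∈ A q
      · rw [Set.indicator_of_mem hy]
        have hy' : ‖q‖ / 2 ≤ ‖y - q‖ := hy
        have : |F q y| ≤ (‖q‖ ^ ν * (1 + ‖y - q‖) ^ (-ν)) * β * (β * (1 + ‖y‖) ^ (-ρ)) := by
          rw [hFdef]
          simp only [abs_mul, abs_of_nonneg (Real.rpow_nonneg (norm_nonneg q) ν)]
          calc ‖q‖ ^ ν * (|f y| * |g (y - q)|)
              ≤ ‖q‖ ^ ν * ((β * (1 + ‖y‖) ^ (-ρ)) * (β * (1 + ‖y - q‖) ^ (-ν))) := by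
                apply mul_le_mul_of_nonneg_left _ (Real.rpow_nonneg (norm_nonneg q) ν)
                exact mul_le_mul (hfb y) (hgb _) (abs_nonneg _)
                  (mul_nonneg hβ.le (Real.rpow_nonneg (h1y y).le _))
            _ = (‖q‖ ^ ν * (1 + ‖y - q‖) ^ (-ν)) * β * (β * (1 + ‖y‖) ^ (-ρ)) := by ring
        refine this.trans ?_
        have hb := aux_pow_bound hν0 (norm_nonneg q) hy'
        calc (‖q‖ ^ ν * (1 + ‖y - q‖) ^ (-ν)) * β * (β * (1 + ‖y‖) ^ (-ρ))
            ≤ 2 ^ ν * β * (β * (1 + ‖y‖) ^ (-ρ)) := by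
              apply mul_le_mul_of_nonneg_right (mul_le_mul_of_nonneg_right hb hβ.le)
              exact mul_nonneg hβ.le (Real.rpow_nonneg (h1y y).le _)
          _ = 2 ^ ν * β * β * (1 + ‖y‖) ^ (-ρ) := by ring
      · rw [Set.indicator_of_notMem hy]
        simp only [abs_zero]
        positivity
    · exact hIρ.const_mul _
    · filter_upwards with y
      have hev : ∀ᶠ q : EuclideanSpace ℝ (Fin n) in cobounded (EuclideanSpace ℝ (Fin n)),
          y ∈ A q := by
        filter_upwards [tendsto_norm_cobounded_atTop.eventually_ge_atTop (2 * ‖y‖)] with q hq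
        have h := norm_sub_le y (y - q)
        rw [sub_sub_cancel] at h
        show ‖q‖ / 2 ≤ ‖y - q‖
        linarith
      have := ((key y).const_mul (f y))
      apply this.congr'
      filter_upwards [hev] with q hq
      rw [Set.indicator_of_mem hq, hFdef]
      ring
  -- Part B : the remainder over the complement tends to 0
  have hB : Tendsto (fun q => ∫ y in (A q)ᶜ, F q y)
      (cobounded (EuclideanSpace ℝ (Fin n))) (nhds 0) := by
    set I : ℝ := ∫ z : EuclideanSpace ℝ (Fin n), (1 + ‖z‖) ^ (-ν) with hIdef
    have hInonneg : 0 ≤ I := integral_nonneg fun z => Real.rpow_nonneg (h1y z).le _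
    apply squeeze_zero_norm' (a := fun q : EuclideanSpace ℝ (Fin n) =>
      (β * β * I * 2 ^ ν) * (1 + ‖q‖ / 2) ^ (ν - ρ))
    · filter_upwards with q
      have h1q2 : (0:ℝ) < 1 + ‖q‖ / 2 := by have := norm_nonneg q; linarith
      -- the pointwise bound on (A q)ᶜ
      set G : EuclideanSpace ℝ (Fin n) → ℝ :=
        fun y => (β * (1 + ‖q‖ / 2) ^ (-ρ)) * (‖q‖ ^ ν * (β * (1 + ‖y - q‖) ^ (-ν)))
        with hGdef
      have hGint : Integrable G := by
        have : Integrable (fun y : EuclideanSpace ℝ (Fin n) => (1 + ‖y - q‖) ^ (-ν)) :=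
          hIν.comp_sub_right q
        exact ((this.const_mul β).const_mul _).const_mul _
      have hGnonneg : ∀ y, 0 ≤ G y := by
        intro y
        have := h1y (y - q)
        positivity
      have step1 : ‖∫ y in (A q)ᶜ, F q y‖ ≤ ∫ y in (A q)ᶜ, G y := by
        apply norm_integral_le_of_norm_le (hGint.restrict)
        rw [ae_restrict_iff' (hAmeas q).compl]
        filter_upwards with y hy
        have hy' : ‖y - q‖ < ‖q‖ / 2 := by
          simpa [hAdef, not_le] using hy
        have hyn : ‖q‖ / 2 ≤ ‖y‖ := by
          have h := norm_sub_le y (y - q)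
          rw [sub_sub_cancel] at h
          linarith
        rw [Real.norm_eq_abs, hFdef, hGdef]
        have hfy : |f y| ≤ β * (1 + ‖q‖ / 2) ^ (-ρ) := by
          refine (hfb y).trans ?_
          apply mul_le_mul_of_nonneg_left _ hβ.le
          exact Real.rpow_le_rpow_of_nonpos h1q2 (by linarith) (by linarith)
        simp only [abs_mul, abs_of_nonneg (Real.rpow_nonneg (norm_nonneg q) ν)]
        calc ‖q‖ ^ ν * (|f y| * |g (y - q)|)
            ≤ ‖q‖ ^ ν * ((β * (1 + ‖q‖ / 2) ^ (-ρ)) * (β * (1 + ‖y - q‖) ^ (-ν))) := by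
              apply mul_le_mul_of_nonneg_left _ (Real.rpow_nonneg (norm_nonneg q) ν)
              exact mul_le_mul hfy (hgb _) (abs_nonneg _)
                (mul_nonneg hβ.le (Real.rpow_nonneg h1q2.le _))
          _ = (β * (1 + ‖q‖ / 2) ^ (-ρ)) * (‖q‖ ^ ν * (β * (1 + ‖y - q‖) ^ (-ν))) := by ring
      have step2 : ∫ y in (A q)ᶜ, G y ≤ ∫ y, G y :=
        setIntegral_le_integral hGint (Filter.Eventually.of_forall hGnonneg)
      have step3 : ∫ y, G y = (β * (1 + ‖q‖ / 2) ^ (-ρ)) * (‖q‖ ^ ν * (β * I)) := by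
        rw [hGdef]
        rw [integral_const_mul, integral_const_mul, integral_const_mul, hIdef,
          integral_sub_right_eq_self (fun z : EuclideanSpace ℝ (Fin n) => (1 + ‖z‖) ^ (-ν)) q]
      have step4 : (β * (1 + ‖q‖ / 2) ^ (-ρ)) * (‖q‖ ^ ν * (β * I))
          ≤ (β * β * I * 2 ^ ν) * (1 + ‖q‖ / 2) ^ (ν - ρ) := by
        have hb2 := aux_pow_bound2 hν0 (norm_nonneg q)
        have : (1 + ‖q‖ / 2) ^ (-ρ) * ‖q‖ ^ ν ≤ 2 ^ ν * (1 + ‖q‖ / 2) ^ (ν - ρ) := by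
          calc (1 + ‖q‖ / 2) ^ (-ρ) * ‖q‖ ^ ν
              ≤ (1 + ‖q‖ / 2) ^ (-ρ) * (2 ^ ν * (1 + ‖q‖ / 2) ^ ν) :=
                mul_le_mul_of_nonneg_left hb2 (Real.rpow_nonneg h1q2.le _)
            _ = 2 ^ ν * ((1 + ‖q‖ / 2) ^ ν * (1 + ‖q‖ / 2) ^ (-ρ)) := by ring
            _ = 2 ^ ν * (1 + ‖q‖ / 2) ^ (ν - ρ) := by
                rw [← Real.rpow_add h1q2]; ring_nf
        calc (β * (1 + ‖q‖ / 2) ^ (-ρ)) * (‖q‖ ^ ν * (β * I))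
            = (β * β * I) * ((1 + ‖q‖ / 2) ^ (-ρ) * ‖q‖ ^ ν) := by ring
          _ ≤ (β * β * I) * (2 ^ ν * (1 + ‖q‖ / 2) ^ (ν - ρ)) := by
              apply mul_le_mul_of_nonneg_left this
              positivity
          _ = (β * β * I * 2 ^ ν) * (1 + ‖q‖ / 2) ^ (ν - ρ) := by ring
      exact step1.trans (step2.trans (step3.le.trans step4))
    · have h1 : Tendsto (fun q : EuclideanSpace ℝ (Fin n) => 1 + ‖q‖ / 2)
          (cobounded (EuclideanSpace ℝ (Fin n))) atTop := by
        apply tendsto_atTop_add_const_left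
        exact tendsto_norm_cobounded_atTop.atTop_div_const (by norm_num)
      have h2 : Tendsto (fun x : ℝ => x ^ (ν - ρ)) atTop (nhds 0) := by
        have := tendsto_rpow_neg_atTop (y := ρ - ν) (by linarith)
        simpa [neg_sub] using this
      have := (h2.comp h1).const_mul (β * β * I * 2 ^ ν)
      simpa using this
  -- combine
  have hsplit : ∀ q : EuclideanSpace ℝ (Fin n),
      ‖q‖ ^ ν * ∫ y, f y * g (y - q) =
        (∫ y, (A q).indicator (F q) y) + ∫ y in (A q)ᶜ, F q y := by
    intro q
    rw [← integral_const_mul, integral_indicator (hAmeas q),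
      integral_add_compl (hAmeas q) (hFint q)]
  have hfin := hA.add hB
  rw [add_zero] at hfin
  have hlim : (∫ y, f y * c₀) = c₀ * ∫ y, f y := by
    rw [integral_mul_const, mul_comm]
  rw [hlim] at hfin
  apply hfin.congr
  intro q
  exact (hsplit q).symm
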